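/- Let δ, ε ∈ ℝ^A with associated positive parameters α_δ, α_ε ∈ {1,…,T−1}, set γ := δ + ε and α_γ := [α_δ + α_ε]_T, and assume α_γ ≥ 1. If y ∈ ℝ^A with y ≥ 0 satisfies the normalized change-cycle inequalities δ₊ᵀy/α_δ + δ₋ᵀy/(T−α_δ) ≥ 1 and ε₊ᵀy/α_ε + ε₋ᵀy/(T−α_ε) ≥ 1, and additionally γ₊ = δ₊ + ε₊ and γ₋ = δ₋ + ε₋, then γ₊ᵀy/α_γ + γ₋ᵀy/(T−α_γ) ≥ 1. -/

import Mathlib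

open Finset

/-- Mediant-type combination of two normalized inequalities. -/
lemma key_mediant (T α1 α2 a1 b1 a2 b2 : ℝ)
    (hα1 : 0 < α1) (hα2 : 0 < α2) (hσ : α1 + α2 < T)
    (hb1 : 0 ≤ b1) (hb2 : 0 ≤ b2)
    (h1 : 1 ≤ a1 / α1 + b1 / (T - α1))
    (h2 : 1 ≤ a2 / α2 + b2 / (T - α2)) :
    1 ≤ (a1 + a2) / (α1 + α2) + (b1 + b2) / (T - (α1 + α2)) := by
  have hσ0 : 0 < α1 + α2 := by linarith
  have hTσ : 0 < T - (α1 + α2) := by linarith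
  have hTα1 : 0 < T - α1 := by linarith
  have hTα2 : 0 < T - α2 := by linarith
  have hT : 0 < T := by linarith
  rw [div_add_div _ _ hα1.ne' hTα1.ne', le_div_iff₀ (mul_pos hα1 hTα1)] at h1
  rw [div_add_div _ _ hα2.ne' hTα2.ne', le_div_iff₀ (mul_pos hα2 hTα2)] at h2
  have hX1 : α1 * (T - (α1 + α2)) ≤ a1 * (T - (α1 + α2)) + b1 * (α1 + α2) := by
    nlinarith [mul_nonneg (sub_nonneg.mpr h1) hTσ.le,
      mul_nonneg (mul_nonneg hb1 hT.le) hα2.le, hTα1]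
  have hX2 : α2 * (T - (α1 + α2)) ≤ a2 * (T - (α1 + α2)) + b2 * (α1 + α2) := by
    nlinarith [mul_nonneg (sub_nonneg.mpr h2) hTσ.le,
      mul_nonneg (mul_nonneg hb2 hT.le) hα1.le, hTα2]
  rw [div_add_div _ _ hσ0.ne' hTσ.ne', le_div_iff₀ (mul_pos hσ0 hTσ)]
  nlinarith [hX1, hX2]

/-- Combination of two normalized change-cycle inequalities (induction step of
the simple-cycle reduction). -/
theorem split_stmt7 {A : Type} [Fintype A]
    (T : ℤ) (hT : 2 ≤ T)
    (αδ αε αγ : ℤ)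
    (hδ1 : 1 ≤ αδ) (hδ2 : αδ ≤ T - 1)
    (hε1 : 1 ≤ αε) (hε2 : αε ≤ T - 1)
    (hαγ : αγ = (αδ + αε) % T) (hγ1 : 1 ≤ αγ)
    (δ ε γ : A → ℝ) (hγ : γ = δ + ε)
    (y : A → ℝ) (hy : ∀ a, 0 ≤ y a)
    (hpos : ∀ a, max (γ a) 0 = max (δ a) 0 + max (ε a) 0)
    (hneg : ∀ a, max (-γ a) 0 = max (-δ a) 0 + max (-ε a) 0)
    (h1 : (∑ a, max (δ a) 0 * y a) / (αδ : ℝ)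
        + (∑ a, max (-δ a) 0 * y a) / ((T : ℝ) - (αδ : ℝ)) ≥ 1)
    (h2 : (∑ a, max (ε a) 0 * y a) / (αε : ℝ)
        + (∑ a, max (-ε a) 0 * y a) / ((T : ℝ) - (αε : ℝ)) ≥ 1) :
    (∑ a, max (γ a) 0 * y a) / (αγ : ℝ)
        + (∑ a, max (-γ a) 0 * y a) / ((T : ℝ) - (αγ : ℝ)) ≥ 1 := by
  have hPγ : (∑ a, max (γ a) 0 * y a)
      = (∑ a, max (δ a) 0 * y a) + (∑ a, max (ε a) 0 * y a) := by
    rw [← Finset.sum_add_distrib]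
    exact Finset.sum_congr rfl fun a _ => by rw [hpos a, add_mul]
  have hNγ : (∑ a, max (-γ a) 0 * y a)
      = (∑ a, max (-δ a) 0 * y a) + (∑ a, max (-ε a) 0 * y a) := by
    rw [← Finset.sum_add_distrib]
    exact Finset.sum_congr rfl fun a _ => by rw [hneg a, add_mul]
  have hPδ0 : (0:ℝ) ≤ ∑ a, max (δ a) 0 * y a :=
    Finset.sum_nonneg fun a _ => mul_nonneg (le_max_right _ _) (hy a)
  have hPε0 : (0:ℝ) ≤ ∑ a, max (ε a) 0 * y a :=
    Finset.sum_nonneg fun a _ => mul_nonneg (le_max_right _ _) (hy a)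
  have hNδ0 : (0:ℝ) ≤ ∑ a, max (-δ a) 0 * y a :=
    Finset.sum_nonneg fun a _ => mul_nonneg (le_max_right _ _) (hy a)
  have hNε0 : (0:ℝ) ≤ ∑ a, max (-ε a) 0 * y a :=
    Finset.sum_nonneg fun a _ => mul_nonneg (le_max_right _ _) (hy a)
  have hδ1' : (1:ℝ) ≤ (αδ:ℝ) := by exact_mod_cast hδ1
  have hδ2' : (αδ:ℝ) ≤ (T:ℝ) - 1 := by
    have : (αδ:ℝ) ≤ ((T - 1 : ℤ):ℝ) := by exact_mod_cast hδ2
    push_cast at this; linarith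
  have hε1' : (1:ℝ) ≤ (αε:ℝ) := by exact_mod_cast hε1
  have hε2' : (αε:ℝ) ≤ (T:ℝ) - 1 := by
    have : (αε:ℝ) ≤ ((T - 1 : ℤ):ℝ) := by exact_mod_cast hε2
    push_cast at this; linarith
  rw [ge_iff_le]
  rw [hPγ, hNγ]
  by_cases hcase : αδ + αε < T
  · -- αγ = αδ + αε
    have hγval : αγ = αδ + αε := by
      rw [hαγ, Int.emod_eq_of_lt (by linarith) hcase]
    have hγR : (αγ:ℝ) = (αδ:ℝ) + (αε:ℝ) := by rw [hγval]; push_cast; ring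
    rw [hγR]
    exact key_mediant (T:ℝ) (αδ:ℝ) (αε:ℝ) _ _ _ _ (by linarith) (by linarith)
      (by have : ((αδ + αε : ℤ):ℝ) < (T:ℝ) := by exact_mod_cast hcase
          push_cast at this; linarith)
      hNδ0 hNε0 h1 h2
  · -- αγ = αδ + αε - T
    push_neg at hcase
    have hγval : αγ = αδ + αε - T := by
      rw [hαγ]
      have : (αδ + αε) % T = (αδ + αε - T) % T := (Int.sub_emod_right _ _).symm
      rw [this, Int.emod_eq_of_lt (by omega) (by omega)]
    have hγR : (αγ:ℝ) = (αδ:ℝ) + (αε:ℝ) - (T:ℝ) := by rw [hγval]; push_cast; ring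
    have hsum : T < αδ + αε := by omega
    have hsumR : (T:ℝ) < (αδ:ℝ) + (αε:ℝ) := by exact_mod_cast hsum
    have := key_mediant (T:ℝ) ((T:ℝ) - (αδ:ℝ)) ((T:ℝ) - (αε:ℝ))
      (∑ a, max (-δ a) 0 * y a) (∑ a, max (δ a) 0 * y a)
      (∑ a, max (-ε a) 0 * y a) (∑ a, max (ε a) 0 * y a)
      (by linarith) (by linarith) (by linarith) hPδ0 hPε0
      (by rw [ge_iff_le] at h1
          have e1 : (T:ℝ) - ((T:ℝ) - (αδ:ℝ)) = (αδ:ℝ) := by ring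
          rw [e1]; linarith)
      (by rw [ge_iff_le] at h2
          have e2 : (T:ℝ) - ((T:ℝ) - (αε:ℝ)) = (αε:ℝ) := by ring
          rw [e2]; linarith)
    have e3 : (T:ℝ) - ((T:ℝ) - (αδ:ℝ) + ((T:ℝ) - (αε:ℝ))) = (αγ:ℝ) := by
      rw [hγR]; ring
    have e4 : (T:ℝ) - (αδ:ℝ) + ((T:ℝ) - (αε:ℝ)) = (T:ℝ) - (αγ:ℝ) := by
      rw [hγR]; ring
    rw [e3, e4] at this
    linarith
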